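/- Let α > −1 be real, N ≥ 1, c > 0, let (v_n)_{n≥1} be a strictly increasing sequence of positive reals, and let (u_n)_{n≥1} be real numbers such that for every integer k ≥ 0, every 0 ≤ i ≤ N−1, the series Σ_{n=1}^∞ v_n^k · |u_n| · |J_α^{(i)}(c v_n)| and Σ_{n=1}^∞ v_n^k · |u_n| · |J_{α+i}(c v_n)| converge. Then det_{1≤i,j≤N}[ Σ_{n=1}^∞ (−1)^{i−1} · v_n^{i+2j+α−3} · J_α^{(i−1)}(c v_n) · u_n ] = det_{1≤i,j≤N}[ Σ_{n=1}^∞ v_n^{i+2j+α−3} · J_{α+i−1}(c v_n) · u_n ]. -/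

import Mathlib

/-- The Bessel function of the first kind, for `x > 0`,
`J_α(x) = Σ_{k=0}^∞ (-1)^k (x/2)^{2k+α} / (k! Γ(k+α+1))`. -/
noncomputable def besselJ (α x : ℝ) : ℝ :=
  ∑' k : ℕ, (-1 : ℝ) ^ k * (x / 2) ^ (2 * (k : ℝ) + α) /
    ((Nat.factorial k : ℝ) * Real.Gamma ((k : ℝ) + α + 1))

lemma gamma_lb (μ : ℝ) (hμ : -1 < μ) (k : ℕ) :
    min (Real.Gamma (μ+1)) (Real.Gamma (μ+2)) ≤ Real.Gamma ((k:ℝ)+μ+1) := by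
  induction k with
  | zero => simpa using min_le_left (Real.Gamma (μ+1)) (Real.Gamma (μ+2))
  | succ n ih =>
    rcases Nat.eq_zero_or_pos n with rfl | hn
    · have : ((0:ℕ):ℝ)+1+μ+1 = μ+2 := by push_cast; ring
      rw [Nat.cast_succ, this]
      exact min_le_right _ _
    · have h1 : (1:ℝ) ≤ (n:ℝ)+μ+1 := by
        have : (1:ℝ) ≤ n := by exact_mod_cast hn
        linarith
      have heq : Real.Gamma (((n+1:ℕ):ℝ)+μ+1) = ((n:ℝ)+μ+1) * Real.Gamma ((n:ℝ)+μ+1) := by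
        push_cast
        rw [show (n:ℝ)+1+μ+1 = ((n:ℝ)+μ+1)+1 by ring, Real.Gamma_add_one (by linarith)]
      rw [heq]
      calc min (Real.Gamma (μ+1)) (Real.Gamma (μ+2)) ≤ Real.Gamma ((n:ℝ)+μ+1) := ih
        _ ≤ _ := le_mul_of_one_le_left (Real.Gamma_pos_of_pos (by linarith)).le h1

lemma gamma_lb_pos (μ : ℝ) (hμ : -1 < μ) :
    0 < min (Real.Gamma (μ+1)) (Real.Gamma (μ+2)) :=
  lt_min (Real.Gamma_pos_of_pos (by linarith)) (Real.Gamma_pos_of_pos (by linarith))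

/-- summability of a bound of the form C * (2k+E) * q^(2k) / (k! Γ(k+μ+1)) etc.
    We prove a generic helper: Summable fun k => C * (2*k + E) * q ^ (2*k) / (k! * Γ(k+μ+1)) -/
lemma summable_aux (μ : ℝ) (hμ : -1 < μ) (C E q : ℝ) (hE : 0 ≤ E) (hq : 0 ≤ q) :
    Summable fun k : ℕ => C * (2*(k:ℝ) + E) * q ^ (2*k) / ((Nat.factorial k : ℝ) * Real.Gamma ((k:ℝ)+μ+1)) := by
  set G := min (Real.Gamma (μ+1)) (Real.Gamma (μ+2)) with hG
  have hGpos := gamma_lb_pos μ hμ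
  have hs : Summable fun k : ℕ => (|C| * (E+2) / G) * ((2*q^2) ^ k / (Nat.factorial k : ℝ)) :=
    (Real.summable_pow_div_factorial _).mul_left _
  refine Summable.of_norm_bounded hs ?_
  intro k
  have hfac : (0:ℝ) < Nat.factorial k := by positivity
  have hGam : 0 < Real.Gamma ((k:ℝ)+μ+1) := Real.Gamma_pos_of_pos (by
    have : (0:ℝ) ≤ k := Nat.cast_nonneg k
    linarith)
  have h1 : ‖C * (2*(k:ℝ) + E) * q ^ (2*k) / ((Nat.factorial k : ℝ) * Real.Gamma ((k:ℝ)+μ+1))‖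
      = |C| * (2*(k:ℝ) + E) * q ^ (2*k) / ((Nat.factorial k : ℝ) * Real.Gamma ((k:ℝ)+μ+1)) := by
    rw [Real.norm_eq_abs, abs_div, abs_mul, abs_mul,
      abs_of_nonneg (by positivity : (0:ℝ) ≤ 2*(k:ℝ)+E), abs_of_nonneg (by positivity : (0:ℝ) ≤ q ^ (2*k)),
      abs_of_nonneg (mul_pos hfac hGam).le]
  rw [h1]
  have hkey : (2*(k:ℝ) + E) ≤ (E+2) * 2^k := by
    have h2k : (k:ℝ) ≤ 2^k := by
      exact_mod_cast (Nat.lt_two_pow_self (n := k)).le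
    have h1le : (1:ℝ) ≤ 2^k := one_le_pow₀ (by norm_num : (1:ℝ) ≤ 2)
    nlinarith
  have hGam' : G ≤ Real.Gamma ((k:ℝ)+μ+1) := gamma_lb μ hμ k
  have hq2 : q ^ (2*k) = (q^2)^k := by rw [pow_mul]
  rw [div_le_iff₀ (by positivity)]
  have expand : (|C| * (E+2) / G) * ((2*q^2) ^ k / (Nat.factorial k : ℝ)) * ((Nat.factorial k : ℝ) * Real.Gamma ((k:ℝ)+μ+1))
      = |C| * (E+2) * 2^k * (q^2)^k * (Real.Gamma ((k:ℝ)+μ+1) / G) := by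
    field_simp
    ring
  rw [expand]
  have : |C| * (2*(k:ℝ) + E) * q ^ (2*k) ≤ |C| * (E+2) * 2^k * (q^2)^k := by
    rw [hq2]
    calc |C| * (2*(k:ℝ) + E) * (q^2)^k ≤ |C| * ((E+2) * 2^k) * (q^2)^k := by
          apply mul_le_mul_of_nonneg_right _ (by positivity)
          exact mul_le_mul_of_nonneg_left hkey (abs_nonneg C)
      _ = |C| * (E+2) * 2^k * (q^2)^k := by ring
  calc |C| * (2*(k:ℝ) + E) * q ^ (2*k) ≤ |C| * (E+2) * 2^k * (q^2)^k := this
    _ ≤ |C| * (E+2) * 2^k * (q^2)^k * (Real.Gamma ((k:ℝ)+μ+1) / G) := by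
        nlinarith [(one_le_div hGpos).mpr hGam', mul_nonneg (mul_nonneg (mul_nonneg (abs_nonneg C) (by positivity : (0:ℝ) ≤ E+2)) (by positivity : (0:ℝ) ≤ (2:ℝ)^k)) (by positivity : (0:ℝ) ≤ ((q:ℝ)^2)^k)]
    _ = _ := by ring

noncomputable def bJt (μ : ℝ) (k : ℕ) (z : ℝ) : ℝ :=
  (-1:ℝ)^k * (z/2)^(2*(k:ℝ)+μ) / ((Nat.factorial k : ℝ) * Real.Gamma ((k:ℝ)+μ+1))

noncomputable def bJt' (μ : ℝ) (k : ℕ) (z : ℝ) : ℝ :=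
  (-1:ℝ)^k * ((2*(k:ℝ)+μ) * (z/2)^(2*(k:ℝ)+μ-1) * (1/2)) /
    ((Nat.factorial k : ℝ) * Real.Gamma ((k:ℝ)+μ+1))

lemma besselJ_eq_tsum (μ x : ℝ) : besselJ μ x = ∑' k, bJt μ k x := rfl

lemma gamma_pos' (μ : ℝ) (hμ : -1 < μ) (k : ℕ) : 0 < Real.Gamma ((k:ℝ)+μ+1) :=
  Real.Gamma_pos_of_pos (by have : (0:ℝ) ≤ k := Nat.cast_nonneg k; linarith)

lemma besselJ_summable (μ : ℝ) (hμ : -1 < μ) {x : ℝ} (hx : 0 < x) :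
    Summable fun k : ℕ => bJt μ k x := by
  refine Summable.of_norm_bounded (summable_aux μ hμ ((x/2)^μ) 1 (x/2) zero_le_one (by positivity)) ?_
  intro k
  have hx2 : (0:ℝ) < x/2 := half_pos hx
  have hfac : (0:ℝ) < Nat.factorial k := by positivity
  have hGam := gamma_pos' μ hμ k
  have hsplit : (x/2) ^ (2*(k:ℝ)+μ) = (x/2)^μ * (x/2) ^ (2*k) := by
    rw [show 2*(k:ℝ)+μ = μ + ((2*k : ℕ):ℝ) by push_cast; ring,
      Real.rpow_add hx2, Real.rpow_natCast]
  rw [bJt, Real.norm_eq_abs, abs_div, abs_mul, abs_pow, abs_neg, abs_one, one_pow, one_mul,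
    abs_of_nonneg (Real.rpow_nonneg hx2.le _), abs_of_nonneg (mul_pos hfac hGam).le, hsplit]
  rw [div_le_div_iff_of_pos_right (mul_pos hfac hGam)]
  have h1 : (1:ℝ) ≤ 2*(k:ℝ)+1 := by have : (0:ℝ) ≤ k := Nat.cast_nonneg k; linarith
  nlinarith [Real.rpow_nonneg hx2.le μ, pow_nonneg hx2.le (2*k),
    mul_nonneg (Real.rpow_nonneg hx2.le μ) (pow_nonneg hx2.le (2*k))]

lemma bJt'_bound (μ : ℝ) (hμ : -1 < μ) {x : ℝ} (hx : 0 < x) (k : ℕ)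
    {y : ℝ} (hy : y ∈ Set.Ioo (x/2) (x+1)) :
    ‖bJt' μ k y‖ ≤ ((((x/4)^(μ-1) + ((x+1)/2)^(μ-1))) * (1/2)) * (2*(k:ℝ)+|μ|) * ((x+1)/2) ^ (2*k) /
      ((Nat.factorial k : ℝ) * Real.Gamma ((k:ℝ)+μ+1)) := by
  set q := (x+1)/2 with hqdef
  set B := (x/4)^(μ-1) + q^(μ-1) with hBdef
  have hq : 0 < q := by rw [hqdef]; linarith
  have hB : 0 < B := by
    rw [hBdef]
    have := Real.rpow_pos_of_pos (by linarith : (0:ℝ) < x/4) (μ-1)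
    have := Real.rpow_pos_of_pos hq (μ-1)
    linarith
  have hy0 : 0 < y := lt_trans (by linarith [hy.1] : (0:ℝ) < x/2) hy.1
  have hy2 : 0 < y/2 := half_pos hy0
  have hfac : (0:ℝ) < Nat.factorial k := by positivity
  have hGam := gamma_pos' μ hμ k
  have hsplit : (y/2) ^ (2*(k:ℝ)+μ-1) = (y/2) ^ (2*k) * (y/2)^(μ-1) := by
    rw [show 2*(k:ℝ)+μ-1 = ((2*k : ℕ):ℝ) + (μ-1) by push_cast; ring,
      Real.rpow_add hy2, Real.rpow_natCast]
  have hyq : y/2 ≤ q := by rw [hqdef]; linarith [hy.2]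
  have hb1 : (y/2) ^ (2*k) ≤ q ^ (2*k) := pow_le_pow_left₀ hy2.le hyq _
  have hb2 : (y/2) ^ (μ-1) ≤ B := by
    rcases le_or_gt 0 (μ-1) with h | h
    · have h1 : (y/2)^(μ-1) ≤ q^(μ-1) := Real.rpow_le_rpow hy2.le hyq h
      have h0 : (0:ℝ) ≤ (x/4)^(μ-1) := Real.rpow_nonneg (by linarith : (0:ℝ) ≤ x/4) _
      rw [hBdef]; linarith
    · have hxy : x/4 ≤ y/2 := by linarith [hy.1]
      have h1 : (y/2)^(μ-1) ≤ (x/4)^(μ-1) :=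
        Real.rpow_le_rpow_of_nonpos (by linarith : (0:ℝ) < x/4) hxy h.le
      have h0 : (0:ℝ) ≤ q^(μ-1) := Real.rpow_nonneg hq.le _
      rw [hBdef]; linarith
  have habs : |2*(k:ℝ)+μ| ≤ 2*(k:ℝ)+|μ| := by
    have := abs_add_le (2*(k:ℝ)) μ
    have h2k : |2*(k:ℝ)| = 2*(k:ℝ) := abs_of_nonneg (by positivity)
    linarith
  have hnorm : ‖bJt' μ k y‖ = |2*(k:ℝ)+μ| * (y/2) ^ (2*(k:ℝ)+μ-1) * (1/2) /
      ((Nat.factorial k : ℝ) * Real.Gamma ((k:ℝ)+μ+1)) := by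
    rw [bJt', Real.norm_eq_abs, abs_div, abs_mul, abs_pow, abs_neg, abs_one, one_pow, one_mul,
      abs_mul, abs_mul, abs_of_nonneg (Real.rpow_nonneg hy2.le _),
      abs_of_nonneg (by norm_num : (0:ℝ) ≤ (1/2:ℝ)),
      abs_of_nonneg (mul_pos hfac hGam).le]
  rw [hnorm, hsplit]
  rw [div_le_div_iff_of_pos_right (mul_pos hfac hGam)]
  have key : |2*(k:ℝ)+μ| * ((y/2)^(2*k) * (y/2)^(μ-1)) ≤ (2*(k:ℝ)+|μ|) * (q^(2*k) * B) := by
    apply mul_le_mul habs _ (by positivity) (by positivity)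
    exact mul_le_mul hb1 hb2 (Real.rpow_nonneg hy2.le _) (by positivity)
  nlinarith [key]

lemma bJt_hasDerivAt (μ : ℝ) (k : ℕ) {y : ℝ} (hy : 0 < y) :
    HasDerivAt (bJt μ k) (bJt' μ k y) y := by
  have h2 : HasDerivAt (fun z : ℝ => z/2) (1/2) y := (hasDerivAt_id y).div_const 2
  have h3 : HasDerivAt (fun w : ℝ => w ^ (2*(k:ℝ)+μ))
      ((2*(k:ℝ)+μ) * (y/2) ^ (2*(k:ℝ)+μ-1)) (y/2) :=
    Real.hasDerivAt_rpow_const (Or.inl (half_pos hy).ne')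
  have h4 := (h3.comp y h2).const_mul ((-1:ℝ)^k)
  have h5 := h4.div_const ((Nat.factorial k : ℝ) * Real.Gamma ((k:ℝ)+μ+1))
  convert h5 using 1 <;> rfl

lemma besselJ_hasDerivAt (μ : ℝ) (hμ : -1 < μ) {x : ℝ} (hx : 0 < x) :
    HasDerivAt (besselJ μ) (μ/x * besselJ μ x - besselJ (μ+1) x) x := by
  set q := (x+1)/2 with hqdef
  set B := (x/4)^(μ-1) + q^(μ-1) with hBdef
  set u : ℕ → ℝ := fun k => (B * (1/2)) * (2*(k:ℝ)+|μ|) * q ^ (2*k) /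
    ((Nat.factorial k : ℝ) * Real.Gamma ((k:ℝ)+μ+1)) with hudef
  have husum : Summable u := summable_aux μ hμ (B * (1/2)) |μ| q (abs_nonneg μ) (by rw [hqdef]; linarith)
  have ht : IsOpen (Set.Ioo (x/2) (x+1)) := isOpen_Ioo
  have ht' : IsPreconnected (Set.Ioo (x/2) (x+1)) := isPreconnected_Ioo
  have hxt : x ∈ Set.Ioo (x/2) (x+1) := ⟨by linarith, by linarith⟩
  have hderiv : ∀ k : ℕ, ∀ y ∈ Set.Ioo (x/2) (x+1), HasDerivAt (bJt μ k) (bJt' μ k y) y :=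
    fun k y hy => bJt_hasDerivAt μ k (lt_trans (by linarith [hy.1] : (0:ℝ) < x/2) hy.1)
  have hbound : ∀ k : ℕ, ∀ y ∈ Set.Ioo (x/2) (x+1), ‖bJt' μ k y‖ ≤ u k :=
    fun k y hy => bJt'_bound μ hμ hx k hy
  have hsumx : Summable fun k => bJt μ k x := besselJ_summable μ hμ hx
  have hmain := hasDerivAt_tsum_of_isPreconnected husum ht ht' hderiv hbound hxt hsumx hxt
  have hbJ : (fun z => ∑' k, bJt μ k z) = besselJ μ := by
    funext z; exact (besselJ_eq_tsum μ z).symm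
  rw [hbJ] at hmain
  have hsumg' : Summable fun k => bJt' μ k x :=
    Summable.of_norm_bounded husum fun k => hbound k x hxt
  have hx2 : (0:ℝ) < x/2 := half_pos hx
  have hg'x : ∀ k : ℕ, bJt' μ k x = μ/x * bJt μ k x + (2*((k:ℕ):ℝ)/x) * bJt μ k x := by
    intro k
    rw [bJt', bJt, show 2*(k:ℝ)+μ-1 = (2*(k:ℝ)+μ) - 1 by ring, Real.rpow_sub hx2, Real.rpow_one]
    have hfac : (0:ℝ) < Nat.factorial k := by positivity
    have hGam := gamma_pos' μ hμ k
    field_simp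
    ring
  have hshift : ∀ k : ℕ, (2*((k+1:ℕ):ℝ)/x) * bJt μ (k+1) x = -(bJt (μ+1) k x) := by
    intro k
    rw [bJt, bJt]
    have hexp : (2*((k+1:ℕ):ℝ)+μ) = (2*(k:ℝ)+(μ+1)) + 1 := by push_cast; ring
    rw [hexp, Real.rpow_add hx2, Real.rpow_one]
    have hfacs : ((Nat.factorial (k+1) : ℕ) : ℝ) = ((k:ℝ)+1) * (Nat.factorial k : ℝ) := by
      rw [Nat.factorial_succ]; push_cast; ring
    have hGeq : Real.Gamma (((k+1:ℕ):ℝ)+μ+1) = Real.Gamma ((k:ℝ)+(μ+1)+1) := by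
      congr 1; push_cast; ring
    rw [hGeq, hfacs]
    have hfac : (0:ℝ) < Nat.factorial k := by positivity
    have hGam := gamma_pos' (μ+1) (by linarith) k
    have hk1 : ((k+1:ℕ):ℝ) = (k:ℝ)+1 := by push_cast; ring
    rw [hk1, pow_succ]
    field_simp
  have hsumh : Summable fun k : ℕ => (2*((k:ℕ):ℝ)/x) * bJt μ k x := by
    have heq : (fun k : ℕ => (2*((k:ℕ):ℝ)/x) * bJt μ k x) = fun k => bJt' μ k x - μ/x * bJt μ k x := by
      funext k; rw [hg'x k]; ring
    rw [heq]
    exact hsumg'.sub (hsumx.mul_left _)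
  have step1 : ∑' k, bJt' μ k x = μ/x * (∑' k, bJt μ k x) + ∑' k : ℕ, (2*((k:ℕ):ℝ)/x) * bJt μ k x := by
    rw [← tsum_mul_left, ← Summable.tsum_add (hsumx.mul_left _) hsumh]
    exact tsum_congr hg'x
  have step2 : ∑' k : ℕ, (2*((k:ℕ):ℝ)/x) * bJt μ k x = - besselJ (μ+1) x := by
    rw [Summable.tsum_eq_zero_add hsumh]
    have h0 : (2*((0:ℕ):ℝ)/x) * bJt μ 0 x = 0 := by norm_num
    rw [h0, zero_add, tsum_congr hshift, tsum_neg, besselJ_eq_tsum]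
  have hfinal : ∑' k, bJt' μ k x = μ/x * besselJ μ x - besselJ (μ+1) x := by
    rw [step1, step2, besselJ_eq_tsum, besselJ_eq_tsum]
    ring
  rw [← hfinal]
  exact hmain

noncomputable def bc (α : ℝ) : ℕ → ℕ → ℝ
  | 0, m => if m = 0 then 1 else 0
  | (i+1), m => (2*(m:ℝ) + α - (i:ℝ)) * bc α i m - (if m = 0 then 0 else bc α i (m-1))

lemma bc_zero (α : ℝ) : ∀ i m : ℕ, i < m → bc α i m = 0 := by
  intro i
  induction i with
  | zero => intro m hm; simp [bc, hm.ne']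
  | succ i ih =>
    intro m hm
    have h1 : bc α i m = 0 := ih m (by omega)
    have hm0 : m ≠ 0 := by omega
    have h2 : bc α i (m-1) = 0 := ih (m-1) (by omega)
    simp [bc, h1, h2, hm0]

lemma bc_diag (α : ℝ) (i : ℕ) : bc α i i = (-1:ℝ)^i := by
  induction i with
  | zero => simp [bc]
  | succ i ih =>
    have h1 : bc α i (i+1) = 0 := bc_zero α i (i+1) (by omega)
    simp [bc, h1, ih, pow_succ]
    try ring

lemma iteratedDeriv_besselJ (α : ℝ) (hα : -1 < α) (i : ℕ) :
    ∀ y : ℝ, 0 < y → iteratedDeriv i (besselJ α) y =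
      ∑ m ∈ Finset.range (i+1), bc α i m * y ^ ((m:ℝ) - (i:ℝ)) * besselJ (α + (m:ℕ)) y := by
  induction i with
  | zero =>
    intro y hy
    simp [iteratedDeriv_zero, bc, Real.rpow_zero]
  | succ i ih =>
    intro y hy
    have hαm : ∀ m : ℕ, (-1:ℝ) < α + m := by
      intro m; have : (0:ℝ) ≤ m := Nat.cast_nonneg m; linarith
    set F : ℝ → ℝ := fun z => ∑ m ∈ Finset.range (i+1),
      bc α i m * z ^ ((m:ℝ) - (i:ℝ)) * besselJ (α + (m:ℕ)) z with hF
    have hder : HasDerivAt F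
        (∑ m ∈ Finset.range (i+1), bc α i m *
          ((((m:ℝ)-(i:ℝ)) * y ^ ((m:ℝ)-(i:ℝ)-1)) * besselJ (α + (m:ℕ)) y
            + y ^ ((m:ℝ)-(i:ℝ)) * ((α+(m:ℕ))/y * besselJ (α+(m:ℕ)) y - besselJ ((α+(m:ℕ))+1) y))) y := by
      apply HasDerivAt.fun_sum
      intro m hm
      have h1 : HasDerivAt (fun z : ℝ => z ^ ((m:ℝ)-(i:ℝ)))
          (((m:ℝ)-(i:ℝ)) * y ^ ((m:ℝ)-(i:ℝ)-1)) y :=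
        Real.hasDerivAt_rpow_const (Or.inl hy.ne')
      have h2 : HasDerivAt (besselJ (α+(m:ℕ)))
          ((α+(m:ℕ))/y * besselJ (α+(m:ℕ)) y - besselJ ((α+(m:ℕ))+1) y) y :=
        besselJ_hasDerivAt (α+(m:ℕ)) (hαm m) hy
      have h3 := (h1.mul h2).const_mul (bc α i m)
      have hfeq : (fun z => bc α i m * (z ^ ((m:ℝ)-(i:ℝ)) * besselJ (α+(m:ℕ)) z))
          = (fun z => bc α i m * z ^ ((m:ℝ)-(i:ℝ)) * besselJ (α+(m:ℕ)) z) := by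
        funext z; ring
      simp only [Pi.mul_def] at h3
      rw [hfeq] at h3
      convert h3 using 1
      try ring
    have hEq : iteratedDeriv i (besselJ α) =ᶠ[nhds y] F :=
      Filter.eventuallyEq_of_mem (Ioi_mem_nhds hy) (fun z hz => ih z hz)
    have hD := hder.congr_of_eventuallyEq hEq
    rw [iteratedDeriv_succ, hD.deriv]
    -- algebra of finite sums
    have perterm : ∀ m ∈ Finset.range (i+1),
        bc α i m * ((((m:ℝ)-(i:ℝ)) * y ^ ((m:ℝ)-(i:ℝ)-1)) * besselJ (α + (m:ℕ)) y
          + y ^ ((m:ℝ)-(i:ℝ)) * ((α+(m:ℕ))/y * besselJ (α+(m:ℕ)) y - besselJ ((α+(m:ℕ))+1) y))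
        = (2*(m:ℝ)+α-(i:ℝ)) * bc α i m * y ^ ((m:ℝ)-(i:ℝ)-1) * besselJ (α+(m:ℕ)) y
          - bc α i m * y ^ ((m:ℝ)-(i:ℝ)) * besselJ ((α+(m:ℕ))+1) y := by
      intro m hm
      have hys : y ^ ((m:ℝ)-(i:ℝ)) = y ^ ((m:ℝ)-(i:ℝ)-1) * y := by
        rw [← Real.rpow_add_one hy.ne' ((m:ℝ)-(i:ℝ)-1)]
        congr 1
        ring
      rw [hys]
      field_simp
      ring
    rw [Finset.sum_congr rfl perterm, Finset.sum_sub_distrib]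
    -- RHS expansion
    have hbc : ∀ m ∈ Finset.range (i+2),
        bc α (i+1) m * y ^ ((m:ℝ) - ((i+1:ℕ):ℝ)) * besselJ (α + (m:ℕ)) y
        = (2*(m:ℝ)+α-(i:ℝ)) * bc α i m * y ^ ((m:ℝ) - ((i+1:ℕ):ℝ)) * besselJ (α + (m:ℕ)) y
          - (if m = 0 then 0 else bc α i (m-1)) * y ^ ((m:ℝ) - ((i+1:ℕ):ℝ)) * besselJ (α + (m:ℕ)) y := by
      intro m hm
      show bc α (i+1) m * _ * _ = _
      rw [bc]
      ring
    rw [Finset.sum_congr rfl hbc, Finset.sum_sub_distrib]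
    congr 1
    · -- first sums match
      symm
      rw [Finset.sum_range_succ, bc_zero α i (i+1) (by omega)]
      simp only [mul_zero, zero_mul, add_zero]
      apply Finset.sum_congr rfl
      intro m hm
      have hcast : (m:ℝ) - ((i+1:ℕ):ℝ) = (m:ℝ)-(i:ℝ)-1 := by push_cast; ring
      rw [hcast]
    · -- second sums match
      symm
      rw [Finset.sum_range_succ']
      simp only [if_true, reduceIte, zero_mul, add_zero]
      apply Finset.sum_congr rfl
      intro m hm
      have h0 : (m+1 : ℕ) ≠ 0 := by omega
      rw [if_neg h0]
      have h1 : ((m+1:ℕ)) - 1 = m := by omega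
      rw [h1]
      have h2 : (((m+1:ℕ)):ℝ) - ((i+1:ℕ):ℝ) = (m:ℝ)-(i:ℝ) := by push_cast; ring
      rw [h2]
      have h3 : α + (((m+1:ℕ)):ℝ) = (α + (m:ℕ)) + 1 := by push_cast; ring
      rw [h3]
theorem stmt_14 (α : ℝ) (hα : -1 < α) (N : ℕ) (hN : 1 ≤ N) (c : ℝ) (hc : 0 < c)
    (v : ℕ → ℝ) (hvmono : StrictMono v) (hvpos : ∀ n, 0 < v n) (u : ℕ → ℝ)
    (hsum : ∀ k : ℕ, ∀ i < N,
      (Summable fun n : ℕ =>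
        v n ^ k * |u n| * |iteratedDeriv i (besselJ α) (c * v n)|) ∧
      (Summable fun n : ℕ =>
        v n ^ k * |u n| * |besselJ (α + i) (c * v n)|)) :
    (Matrix.of fun i j : Fin N =>
        ∑' n : ℕ, (-1 : ℝ) ^ (i : ℕ) *
          v n ^ (((i : ℕ) : ℝ) + 2 * ((j : ℕ) : ℝ) + α) *
          iteratedDeriv (i : ℕ) (besselJ α) (c * v n) * u n).det
      = (Matrix.of fun i j : Fin N =>
          ∑' n : ℕ, v n ^ (((i : ℕ) : ℝ) + 2 * ((j : ℕ) : ℝ) + α) *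
            besselJ (α + (i : ℕ)) (c * v n) * u n).det := by
  classical
  set K : ℕ := 3*N + ⌈α⌉₊ with hKdef
  -- summability of the building blocks
  have hsumJ : ∀ m : ℕ, m < N → ∀ j : ℕ, j < N → Summable fun n : ℕ =>
      v n ^ ((m:ℝ) + 2*(j:ℝ) + α) * besselJ (α + (m:ℕ)) (c * v n) * u n := by
    intro m hm j hj
    have hbase := (hsum K m hm).2
    have hbase0 := (hsum 0 m hm).2
    refine Summable.of_norm_bounded (hbase.add (hbase0.mul_left (v 0)⁻¹)) ?_
    intro n
    have hvn := hvpos n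
    have hv0 := hvpos 0
    have hrK : (m:ℝ) + 2*(j:ℝ) + α ≤ (K:ℕ) := by
      have h1 : (m:ℝ) ≤ (N:ℝ) - 1 := by
        have : (m:ℝ) + 1 ≤ (N:ℝ) := by exact_mod_cast hm
        linarith
      have h2 : (j:ℝ) ≤ (N:ℝ) - 1 := by
        have : (j:ℝ) + 1 ≤ (N:ℝ) := by exact_mod_cast hj
        linarith
      have h3 : α ≤ (⌈α⌉₊ : ℝ) := Nat.le_ceil α
      have h4 : ((K:ℕ):ℝ) = 3*(N:ℝ) + (⌈α⌉₊ : ℝ) := by rw [hKdef]; push_cast; ring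
      rw [h4]; linarith
    have hr1 : (-1:ℝ) ≤ (m:ℝ) + 2*(j:ℝ) + α := by
      have h1 : (0:ℝ) ≤ m := Nat.cast_nonneg m
      have h2 : (0:ℝ) ≤ j := Nat.cast_nonneg j
      linarith
    have hvr : v n ^ ((m:ℝ) + 2*(j:ℝ) + α) ≤ v n ^ K + (v 0)⁻¹ := by
      rcases le_or_gt 1 (v n) with h | h
      · have h1 : v n ^ ((m:ℝ) + 2*(j:ℝ) + α) ≤ v n ^ ((K:ℕ):ℝ) :=
          Real.rpow_le_rpow_of_exponent_le h hrK
        rw [Real.rpow_natCast] at h1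
        have h2 : (0:ℝ) ≤ (v 0)⁻¹ := by positivity
        linarith
      · have h1 : v n ^ ((m:ℝ) + 2*(j:ℝ) + α) ≤ v n ^ (-1:ℝ) :=
          Real.rpow_le_rpow_of_exponent_ge hvn h.le hr1
        rw [Real.rpow_neg_one] at h1
        have h2 : (v n)⁻¹ ≤ (v 0)⁻¹ := by
          apply inv_anti₀ hv0 (hvmono.monotone (Nat.zero_le n))
        have h3 : (0:ℝ) ≤ v n ^ K := by positivity
        linarith
    have hexp : ‖v n ^ ((m:ℝ) + 2*(j:ℝ) + α) * besselJ (α + (m:ℕ)) (c * v n) * u n‖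
        = v n ^ ((m:ℝ) + 2*(j:ℝ) + α) * (|u n| * |besselJ (α + (m:ℕ)) (c * v n)|) := by
      rw [Real.norm_eq_abs, abs_mul, abs_mul,
        abs_of_nonneg (Real.rpow_nonneg hvn.le _)]
      ring
    rw [hexp]
    have hprod : (0:ℝ) ≤ |u n| * |besselJ (α + (m:ℕ)) (c * v n)| := by positivity
    calc v n ^ ((m:ℝ) + 2*(j:ℝ) + α) * (|u n| * |besselJ (α + (m:ℕ)) (c * v n)|)
        ≤ (v n ^ K + (v 0)⁻¹) * (|u n| * |besselJ (α + (m:ℕ)) (c * v n)|) :=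
          mul_le_mul_of_nonneg_right hvr hprod
      _ = v n ^ K * |u n| * |besselJ (α + (m:ℕ)) (c * v n)|
          + (v 0)⁻¹ * (v n ^ (0:ℕ) * |u n| * |besselJ (α + (m:ℕ)) (c * v n)|) := by
          rw [pow_zero]; ring
  -- the lower-triangular matrix
  set L : Matrix (Fin N) (Fin N) ℝ := Matrix.of fun i m : Fin N =>
    (-1:ℝ)^(i:ℕ) * bc α (i:ℕ) (m:ℕ) * c ^ (((m:ℕ):ℝ) - ((i:ℕ):ℝ)) with hLdef
  set S : ℕ → ℕ → ℝ := fun m j =>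
    ∑' n : ℕ, v n ^ ((m:ℝ) + 2*(j:ℝ) + α) * besselJ (α + (m:ℕ)) (c * v n) * u n with hSdef
  have hM2 : (Matrix.of fun i j : Fin N =>
      ∑' n : ℕ, v n ^ (((i : ℕ) : ℝ) + 2 * ((j : ℕ) : ℝ) + α) *
        besselJ (α + (i : ℕ)) (c * v n) * u n) = Matrix.of fun i j : Fin N => S (i:ℕ) (j:ℕ) := rfl
  have hfactor : (Matrix.of fun i j : Fin N =>
      ∑' n : ℕ, (-1 : ℝ) ^ (i : ℕ) *
        v n ^ (((i : ℕ) : ℝ) + 2 * ((j : ℕ) : ℝ) + α) *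
        iteratedDeriv (i : ℕ) (besselJ α) (c * v n) * u n)
      = L * (Matrix.of fun i j : Fin N => S (i:ℕ) (j:ℕ)) := by
    ext i j
    rw [Matrix.mul_apply]
    have hpt : ∀ n : ℕ, (-1 : ℝ) ^ (i : ℕ) *
        v n ^ (((i : ℕ) : ℝ) + 2 * ((j : ℕ) : ℝ) + α) *
        iteratedDeriv (i : ℕ) (besselJ α) (c * v n) * u n
        = ∑ m ∈ Finset.range ((i:ℕ)+1),
          ((-1:ℝ)^(i:ℕ) * bc α (i:ℕ) m * c ^ ((m:ℝ) - ((i:ℕ):ℝ))) *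
            (v n ^ ((m:ℝ) + 2*((j:ℕ):ℝ) + α) * besselJ (α + (m:ℕ)) (c * v n) * u n) := by
      intro n
      have hcv : 0 < c * v n := mul_pos hc (hvpos n)
      rw [iteratedDeriv_besselJ α hα (i:ℕ) (c * v n) hcv, Finset.mul_sum,
        Finset.sum_mul]
      apply Finset.sum_congr rfl
      intro m hm
      have hsplit : (c * v n) ^ ((m:ℝ) - ((i:ℕ):ℝ))
          = c ^ ((m:ℝ) - ((i:ℕ):ℝ)) * v n ^ ((m:ℝ) - ((i:ℕ):ℝ)) :=
        Real.mul_rpow hc.le (hvpos n).le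
      have hcomb : v n ^ (((i:ℕ):ℝ) + 2*((j:ℕ):ℝ) + α) * v n ^ ((m:ℝ) - ((i:ℕ):ℝ))
          = v n ^ ((m:ℝ) + 2*((j:ℕ):ℝ) + α) := by
        rw [← Real.rpow_add (hvpos n)]
        congr 1
        ring
      calc (-1 : ℝ) ^ (i : ℕ) * v n ^ (((i : ℕ) : ℝ) + 2 * ((j : ℕ) : ℝ) + α) *
            (bc α (i:ℕ) m * (c * v n) ^ ((m:ℝ) - ((i:ℕ):ℝ)) * besselJ (α + (m:ℕ)) (c * v n)) * u n
          = ((-1:ℝ)^(i:ℕ) * bc α (i:ℕ) m * c ^ ((m:ℝ) - ((i:ℕ):ℝ))) *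
            ((v n ^ (((i:ℕ):ℝ) + 2*((j:ℕ):ℝ) + α) * v n ^ ((m:ℝ) - ((i:ℕ):ℝ))) *
              besselJ (α + (m:ℕ)) (c * v n) * u n) := by
            rw [hsplit]; ring
        _ = _ := by rw [hcomb]
    rw [Matrix.of_apply, tsum_congr hpt, Summable.tsum_finsetSum ?hs]
    case hs =>
      intro m hm
      have hmN : m < N := lt_of_le_of_lt (Nat.lt_succ_iff.mp (Finset.mem_range.mp hm)) i.2
      exact (hsumJ m hmN (j:ℕ) j.2).mul_left _
    -- now finite sums
    have hterm : ∀ m ∈ Finset.range ((i:ℕ)+1),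
        (∑' n : ℕ, ((-1:ℝ)^(i:ℕ) * bc α (i:ℕ) m * c ^ ((m:ℝ) - ((i:ℕ):ℝ))) *
          (v n ^ ((m:ℝ) + 2*((j:ℕ):ℝ) + α) * besselJ (α + (m:ℕ)) (c * v n) * u n))
        = ((-1:ℝ)^(i:ℕ) * bc α (i:ℕ) m * c ^ ((m:ℝ) - ((i:ℕ):ℝ))) * S m (j:ℕ) := by
      intro m hm
      rw [tsum_mul_left]
    rw [Finset.sum_congr rfl hterm]
    -- relate to the Fin N sum
    have hFin : ∑ m : Fin N, L i m * Matrix.of (fun i j : Fin N => S (i:ℕ) (j:ℕ)) m j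
        = ∑ m ∈ Finset.range N,
          ((-1:ℝ)^(i:ℕ) * bc α (i:ℕ) m * c ^ ((m:ℝ) - ((i:ℕ):ℝ))) * S m (j:ℕ) := by
      rw [← Fin.sum_univ_eq_sum_range (fun m : ℕ =>
        ((-1:ℝ)^(i:ℕ) * bc α (i:ℕ) m * c ^ ((m:ℝ) - ((i:ℕ):ℝ))) * S m (j:ℕ)) N]
      rfl
    rw [hFin]
    apply Finset.sum_subset
    · intro t ht
      exact Finset.mem_range.mpr (by have h1 := Finset.mem_range.mp ht; have h2 := i.2; omega)
    · intro t htN hti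
      have : (i:ℕ) < t := by
        have := Finset.mem_range.not.mp hti
        omega
      rw [bc_zero α (i:ℕ) t this]
      ring
  rw [hfactor, hM2, Matrix.det_mul]
  have hdetL : L.det = 1 := by
    have htri : L.BlockTriangular OrderDual.toDual := by
      intro i m h
      have him : (i:ℕ) < (m:ℕ) := h
      rw [hLdef, Matrix.of_apply, bc_zero α (i:ℕ) (m:ℕ) him]
      ring
    rw [Matrix.det_of_lowerTriangular L htri]
    have hdiag : ∀ i : Fin N, L i i = 1 := by
      intro i
      rw [hLdef, Matrix.of_apply, bc_diag, sub_self, Real.rpow_zero, mul_one,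
        ← mul_pow]
      norm_num
    rw [Finset.prod_congr rfl (fun i _ => hdiag i), Finset.prod_const_one]
  rw [hdetL, one_mul]
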